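/- Assume f : Ω × ℝ → ℝ is a Carathéodory function with |f(x,t)| ≤ a₀(1+|t|^{p-1}) for some a₀ > 0 and p ∈ (2, 2*_s), and suppose limsup_{|t|→∞} F(x,t)/t² ≤ 0 uniformly for a.e. x ∈ Ω, where F(x,t) = ∫₀ᵗ f(x,τ)dτ. Then the energy functional φ(u) = ‖u‖²/2 − ∫_Ω F(x,u)dx is coercive on H^s_0(Ω), i.e., φ(u) → ∞ as ‖u‖ → ∞. -/

import Mathlib

open MeasureTheory

/-- The Gagliardo bilinear form. -/
noncomputable def gform (N : ℕ) (s : ℝ) (u v : EuclideanSpace ℝ (Fin N) → ℝ) : ℝ :=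
  ∫ z : EuclideanSpace ℝ (Fin N) × EuclideanSpace ℝ (Fin N),
    ((u z.1 - u z.2) * (v z.1 - v z.2)) / ‖z.1 - z.2‖ ^ ((N : ℝ) + 2 * s)

/-- Membership in the fractional Sobolev space `H^s_0(Ω)`. -/
def MemHs0 (N : ℕ) (s : ℝ) (Ω : Set (EuclideanSpace ℝ (Fin N)))
    (u : EuclideanSpace ℝ (Fin N) → ℝ) : Prop :=
  MemLp u 2 (volume : Measure (EuclideanSpace ℝ (Fin N))) ∧
  (∀ᵐ x ∂(volume : Measure (EuclideanSpace ℝ (Fin N))), x ∉ Ω → u x = 0) ∧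
  Integrable (fun z : EuclideanSpace ℝ (Fin N) × EuclideanSpace ℝ (Fin N) =>
    (u z.1 - u z.2) ^ 2 / ‖z.1 - z.2‖ ^ ((N : ℝ) + 2 * s)) volume

set_option maxHeartbeats 1000000 in
/-- Sublinear reaction: if `f` is Carathéodory with subcritical growth and
`limsup_{|t|→∞} F(x,t)/t² ≤ 0` uniformly for a.e. `x ∈ Ω`, then the energy functional
`φ(u) = ‖u‖²/2 − ∫_Ω F(x,u) dx` is coercive on `H^s_0(Ω)`. -/
theorem stmt_2 (N : ℕ) (hN : 1 < N) (s : ℝ) (hs : s ∈ Set.Ioo (0 : ℝ) 1)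
    (hNs : 2 * s < (N : ℝ))
    (Ω : Set (EuclideanSpace ℝ (Fin N))) (hΩ : Bornology.IsBounded Ω)
    (hΩm : MeasurableSet Ω)
    (f : EuclideanSpace ℝ (Fin N) → ℝ → ℝ)
    -- f Carathéodory
    (hfmeas : ∀ t : ℝ, Measurable fun x => f x t)
    (hfcont : ∀ᵐ x ∂(volume : Measure (EuclideanSpace ℝ (Fin N))), Continuous (f x))
    -- subcritical growth, p ∈ (2, 2*_s)
    (a₀ p : ℝ) (ha₀ : 0 < a₀) (hp2 : 2 < p) (hpc : p < 2 * (N : ℝ) / ((N : ℝ) - 2 * s))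
    (hgrowth : ∀ᵐ x ∂(volume.restrict Ω), ∀ t : ℝ, |f x t| ≤ a₀ * (1 + |t| ^ (p - 1)))
    -- limsup_{|t|→∞} F(x,t)/t² ≤ 0 uniformly for a.e. x ∈ Ω
    (hlimsup : ∀ ε > (0 : ℝ), ∃ M > (0 : ℝ), ∀ᵐ x ∂(volume.restrict Ω),
      ∀ t : ℝ, M ≤ |t| → (∫ τ in (0 : ℝ)..t, f x τ) ≤ ε * t ^ 2)
    -- first eigenvalue: best constant of the embedding H^s_0(Ω) ↪ L²
    (lam1 : ℝ) (hlam1 : 0 < lam1)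
    (hemb : ∀ u : EuclideanSpace ℝ (Fin N) → ℝ, MemHs0 N s Ω u →
      lam1 * ∫ x, (u x) ^ 2 ≤ gform N s u u) :
    -- coercivity: φ(u) → ∞ as ‖u‖ → ∞
    ∀ M₀ : ℝ, ∃ R : ℝ, ∀ u : EuclideanSpace ℝ (Fin N) → ℝ, MemHs0 N s Ω u →
      R ≤ Real.sqrt (gform N s u u) →
      M₀ ≤ gform N s u u / 2 - ∫ x in Ω, (∫ τ in (0 : ℝ)..(u x), f x τ) := by
  intro M₀
  obtain ⟨M, hM, hFbig⟩ := hlimsup (lam1 / 4) (by positivity)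
  set C : ℝ := a₀ * (1 + M ^ (p - 1)) * M with hC
  have hC0 : 0 ≤ C := by positivity
  have hΩvol : volume Ω < ⊤ := hΩ.measure_lt_top
  set V : ℝ := (volume Ω).toReal with hV
  have hV0 : 0 ≤ V := ENNReal.toReal_nonneg
  refine ⟨Real.sqrt (4 * (M₀ + C * V)), ?_⟩
  intro u hu hR
  set g := gform N s u u with hg
  have hg0 : 0 ≤ g :=
    integral_nonneg fun z =>
      div_nonneg (mul_self_nonneg _) (Real.rpow_nonneg (norm_nonneg _) _)
  have hgX : 4 * (M₀ + C * V) ≤ g := by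
    rcases le_or_gt 0 (4 * (M₀ + C * V)) with h | h
    · calc 4 * (M₀ + C * V)
          = Real.sqrt (4 * (M₀ + C * V)) * Real.sqrt (4 * (M₀ + C * V)) :=
            (Real.mul_self_sqrt h).symm
        _ ≤ Real.sqrt g * Real.sqrt g :=
            mul_le_mul hR hR (Real.sqrt_nonneg _) (Real.sqrt_nonneg _)
        _ = g := Real.mul_self_sqrt hg0
    · linarith
  have hae : ∀ᵐ x ∂(volume.restrict Ω),
      (∫ τ in (0 : ℝ)..(u x), f x τ) ≤ lam1 / 4 * (u x) ^ 2 + C := by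
    filter_upwards [hgrowth, hFbig] with x hgr hbig
    rcases le_or_gt M |u x| with h | h
    · have := hbig (u x) h
      nlinarith [sq_nonneg (u x)]
    · have hb : ∀ τ ∈ Set.uIoc (0 : ℝ) (u x), ‖f x τ‖ ≤ a₀ * (1 + M ^ (p - 1)) := by
        intro τ hτ
        have hτa : |τ| ≤ M := by
          rcases Set.mem_uIoc.1 hτ with ⟨h1, h2⟩ | ⟨h1, h2⟩
          · rw [abs_le]
            constructor <;> nlinarith [abs_nonneg (u x), le_abs_self (u x), neg_abs_le (u x)]
          · rw [abs_le]
            constructor <;> nlinarith [abs_nonneg (u x), le_abs_self (u x), neg_abs_le (u x)]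
        have hrp : |τ| ^ (p - 1) ≤ M ^ (p - 1) :=
          Real.rpow_le_rpow (abs_nonneg τ) hτa (by linarith)
        rw [Real.norm_eq_abs]
        calc |f x τ| ≤ a₀ * (1 + |τ| ^ (p - 1)) := hgr τ
          _ ≤ a₀ * (1 + M ^ (p - 1)) := by nlinarith
      have key := intervalIntegral.norm_integral_le_of_norm_le_const hb
      rw [Real.norm_eq_abs] at key
      have hB0 : (0 : ℝ) ≤ a₀ * (1 + M ^ (p - 1)) := by positivity
      have h1 : |∫ τ in (0 : ℝ)..(u x), f x τ| ≤ C := by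
        have h2 : |u x - 0| ≤ M := by
          rw [sub_zero]; exact h.le
        calc |∫ τ in (0 : ℝ)..(u x), f x τ| ≤ a₀ * (1 + M ^ (p - 1)) * |u x - 0| := key
          _ ≤ a₀ * (1 + M ^ (p - 1)) * M := by nlinarith
          _ = C := rfl
      nlinarith [le_abs_self (∫ τ in (0 : ℝ)..(u x), f x τ), sq_nonneg (u x)]
  have hu2 : Integrable (fun x => (u x) ^ 2) volume := hu.1.integrable_sq
  have hconst : IntegrableOn (fun _ : EuclideanSpace ℝ (Fin N) => C) Ω volume :=
    integrableOn_const hΩvol.ne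
  have hdom : Integrable (fun x => lam1 / 4 * (u x) ^ 2 + C) (volume.restrict Ω) :=
    ((hu2.restrict (s := Ω)).const_mul _).add hconst
  have h4 : ∫ x in Ω, (u x) ^ 2 ≤ ∫ x, (u x) ^ 2 :=
    setIntegral_le_integral hu2 (ae_of_all _ fun x => sq_nonneg _)
  have h5 : lam1 * ∫ x, (u x) ^ 2 ≤ g := hemb u hu
  have h6 : (0 : ℝ) ≤ ∫ x in Ω, (u x) ^ 2 :=
    integral_nonneg fun x => sq_nonneg _
  have hCV : 0 ≤ C * V := mul_nonneg hC0 hV0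
  by_cases hint : IntegrableOn (fun x => ∫ τ in (0 : ℝ)..(u x), f x τ) Ω volume
  · have h2 : ∫ x in Ω, (∫ τ in (0 : ℝ)..(u x), f x τ)
        ≤ ∫ x in Ω, (lam1 / 4 * (u x) ^ 2 + C) :=
      integral_mono_ae hint hdom hae
    have h3 : ∫ x in Ω, (lam1 / 4 * (u x) ^ 2 + C)
        = lam1 / 4 * (∫ x in Ω, (u x) ^ 2) + C * V := by
      rw [integral_add ((hu2.restrict (s := Ω)).const_mul _) hconst,
        integral_const_mul, setIntegral_const, smul_eq_mul, measureReal_def, ← hV]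
      ring
    have h7 : lam1 / 4 * (∫ x in Ω, (u x) ^ 2) ≤ g / 4 := by
      have := mul_le_mul_of_nonneg_left h4 (by positivity : (0:ℝ) ≤ lam1 / 4)
      linarith
    linarith
  · rw [integral_undef hint]
    linarith
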